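/- arXiv:1512.03002 — 3 statements merged into one kernel-verified Lean document; each statement's English description precedes it below -/
import Mathlib

section
/- Let a₁ : ℝ → ℝ be real-analytic on an open interval J containing 0 and a set I ⊆ J ∩ (−∞,0), where J is connected and I has an accumulation point in J. Suppose a₁(s) > 0 for s > 0, let m > 0 with [0,m] ⊆ J, and define A₁(τ) = ∫_τ^{−τ+m} a₁(s) ds (assume −τ+m ∈ J for τ ∈ J as relevant). If A₁ vanishes on I, then A₁ vanishes identically on J; in particular ∫₀^m a₁(s) ds = 0, which is impossible since a₁ > 0 on (0,m]. -/
open Set Filter intervalIntegral MeasureTheory Topology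

/-- Among three pairwise distinct reals all different from `x`, two lie on the
same side of `x`. -/
lemma same_side_pair {z₁ z₂ z₃ x : ℝ} (h1 : z₁ ≠ x) (h2 : z₂ ≠ x) (h3 : z₃ ≠ x)
    (d12 : z₁ ≠ z₂) (d13 : z₁ ≠ z₃) (d23 : z₂ ≠ z₃) :
    ∃ a b, a ∈ ({z₁, z₂, z₃} : Set ℝ) ∧ b ∈ ({z₁, z₂, z₃} : Set ℝ) ∧ a < b ∧
      (x < a ∨ b < x) := by
  have m1 : z₁ ∈ ({z₁, z₂, z₃} : Set ℝ) := by simp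
  have m2 : z₂ ∈ ({z₁, z₂, z₃} : Set ℝ) := by simp
  have m3 : z₃ ∈ ({z₁, z₂, z₃} : Set ℝ) := by simp
  rcases h1.lt_or_gt with a1 | a1 <;> rcases h2.lt_or_gt with a2 | a2 <;>
    rcases h3.lt_or_gt with a3 | a3
  · rcases d12.lt_or_gt with h | h
    exacts [⟨z₁, z₂, m1, m2, h, Or.inr a2⟩, ⟨z₂, z₁, m2, m1, h, Or.inr a1⟩]
  · rcases d12.lt_or_gt with h | h
    exacts [⟨z₁, z₂, m1, m2, h, Or.inr a2⟩, ⟨z₂, z₁, m2, m1, h, Or.inr a1⟩]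
  · rcases d13.lt_or_gt with h | h
    exacts [⟨z₁, z₃, m1, m3, h, Or.inr a3⟩, ⟨z₃, z₁, m3, m1, h, Or.inr a1⟩]
  · rcases d23.lt_or_gt with h | h
    exacts [⟨z₂, z₃, m2, m3, h, Or.inl a2⟩, ⟨z₃, z₂, m3, m2, h, Or.inl a3⟩]
  · rcases d23.lt_or_gt with h | h
    exacts [⟨z₂, z₃, m2, m3, h, Or.inr a3⟩, ⟨z₃, z₂, m3, m2, h, Or.inr a2⟩]
  · rcases d13.lt_or_gt with h | h
    exacts [⟨z₁, z₃, m1, m3, h, Or.inl a1⟩, ⟨z₃, z₁, m3, m1, h, Or.inl a3⟩]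
  · rcases d12.lt_or_gt with h | h
    exacts [⟨z₁, z₂, m1, m2, h, Or.inl a1⟩, ⟨z₂, z₁, m2, m1, h, Or.inl a2⟩]
  · rcases d12.lt_or_gt with h | h
    exacts [⟨z₁, z₂, m1, m2, h, Or.inl a1⟩, ⟨z₂, z₁, m2, m1, h, Or.inl a2⟩]

/-- Identity-theorem step: a₁ real-analytic on an open connected J containing 0,
[0,m] ⊆ J, a₁ > 0 for s > 0, I ⊆ J ∩ (−∞,0) with an accumulation point in J,
A₁(τ) = ∫_τ^{−τ+m} a₁ vanishing on I. Then A₁ vanishes identically on J; in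
particular ∫₀^m a₁ = 0, which is impossible. -/
theorem stmt4 (J : Set ℝ) (hJo : IsOpen J) (hJc : IsConnected J)
    (m : ℝ) (hm : 0 < m) (hJm : Set.Icc (0:ℝ) m ⊆ J)
    (hrefl : ∀ τ ∈ J, -τ + m ∈ J)
    (a₁ : ℝ → ℝ) (ha : AnalyticOn ℝ a₁ J)
    (hpos : ∀ s : ℝ, 0 < s → 0 < a₁ s)
    (I : Set ℝ) (hI : I ⊆ J ∩ Set.Iio 0)
    (x : ℝ) (hxJ : x ∈ J) (hx : AccPt x (Filter.principal I))
    (hzero : ∀ τ₀ ∈ I, (∫ s in τ₀..(-τ₀ + m), a₁ s) = 0) :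
    (∀ τ ∈ J, (∫ s in τ..(-τ + m), a₁ s) = 0) ∧
    (∫ s in (0:ℝ)..m, a₁ s) = 0 ∧ False := by
  have h0J : (0:ℝ) ∈ J := hJm ⟨le_refl 0, hm.le⟩
  have haN : AnalyticOnNhd ℝ a₁ J := (hJo.analyticOn_iff_analyticOnNhd).mp ha
  have hcont : ContinuousOn a₁ J := haN.continuousOn
  have hord : J.OrdConnected := hJc.isPreconnected.ordConnected
  have hint : ∀ a ∈ J, ∀ b ∈ J, IntervalIntegrable a₁ volume a b := fun a haJ b hbJ =>
    (hcont.mono (hord.uIcc_subset haJ hbJ)).intervalIntegrable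
  set F : ℝ → ℝ := fun t => ∫ s in (0:ℝ)..t, a₁ s with hFdef
  have hF : ∀ t ∈ J, HasDerivAt F (a₁ t) t := fun t htJ =>
    intervalIntegral.integral_hasDerivAt_right (hint 0 h0J t htJ)
      (hcont.stronglyMeasurableAtFilter hJo t htJ)
      (hcont.continuousAt (hJo.mem_nhds htJ))
  set A : ℝ → ℝ := fun τ => ∫ s in τ..(-τ + m), a₁ s with hAdef
  have hAF : ∀ τ ∈ J, A τ = F (-τ + m) - F τ := by
    intro τ hτ
    have := integral_interval_sub_left (μ := volume) (f := a₁)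
      (hint 0 h0J _ (hrefl τ hτ)) (hint 0 h0J τ hτ)
    simp only [hAdef, hFdef]
    linarith [this]
  set g : ℝ → ℝ := fun τ => a₁ (-τ + m) + a₁ τ with hgdef
  have hA' : ∀ τ ∈ J, HasDerivAt A (-(g τ)) τ := by
    intro τ hτ
    have h1 : HasDerivAt (fun t : ℝ => F (-t + m)) (-(a₁ (-τ + m))) τ := by
      have hc : HasDerivAt (fun t : ℝ => -t + m) (-1 : ℝ) τ := by
        simpa using ((hasDerivAt_id τ).neg.add_const m)
      have := (hF _ (hrefl τ hτ)).comp τ hc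
      simpa [Function.comp_def, mul_comm] using this
    have h2 := (h1.sub (hF τ hτ))
    have heq : A =ᶠ[𝓝 τ] fun t => F (-t + m) - F t := by
      filter_upwards [hJo.mem_nhds hτ] with t ht using hAF t ht
    have := h2.congr_of_eventuallyEq heq
    convert this using 1
    show -(a₁ (-τ + m) + a₁ τ) = _; ring
    all_goals rfl
  have hgA : AnalyticOnNhd ℝ g J := by
    intro τ hτ
    have h1 : AnalyticAt ℝ (fun t : ℝ => -t + m) τ :=
      ((analyticAt_id).neg.add analyticAt_const)
    have h2 : AnalyticAt ℝ (fun t : ℝ => a₁ (-t + m)) τ := by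
      have := AnalyticAt.comp (g := a₁) (f := fun t : ℝ => -t + m) (x := τ)
        (haN _ (hrefl τ hτ)) h1
      simpa [Function.comp_def] using this
    exact h2.add (haN τ hτ)
  -- frequent zeros of g near x
  have hxne : (𝓝[≠] x ⊓ 𝓟 I).NeBot := hx
  have hpick : ∀ U ∈ 𝓝[≠] x, ∃ z ∈ I, z ∈ U := by
    intro U hU
    rcases (Filter.inf_principal_neBot_iff.mp hxne U hU) with ⟨z, hzU, hzI⟩
    exact ⟨z, hzI, hzU⟩
  have hfreq : ∃ᶠ z in 𝓝[≠] x, g z = 0 := by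
    rw [Filter.frequently_iff]
    intro U hU
    rcases Metric.mem_nhdsWithin_iff.mp hU with ⟨ε₀, hε₀, hball⟩
    rcases Metric.isOpen_iff.mp hJo x hxJ with ⟨ε₁, hε₁, hballJ⟩
    set ε := min ε₀ ε₁ with hε
    have hεpos : 0 < ε := lt_min hε₀ hε₁
    have hballU : Metric.ball x ε ∩ {x}ᶜ ⊆ U := fun z hz =>
      hball ⟨Metric.ball_subset_ball (min_le_left _ _) hz.1, hz.2⟩
    have hballJ' : Metric.ball x ε ⊆ J := fun z hz =>
      hballJ (Metric.ball_subset_ball (min_le_right _ _) hz)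
    -- pick three points of I in the punctured ball
    have pick : ∀ δ : ℝ, 0 < δ → ∃ z ∈ I, z ≠ x ∧ dist z x < δ := by
      intro δ hδ
      have : Metric.ball x δ \ {x} ∈ 𝓝[≠] x :=
        diff_mem_nhdsWithin_compl (Metric.ball_mem_nhds x hδ) {x}
      rcases hpick _ this with ⟨z, hzI, hz⟩
      exact ⟨z, hzI, by simpa using hz.2, hz.1⟩
    obtain ⟨z₁, hz1I, hz1x, hz1d⟩ := pick ε hεpos
    obtain ⟨z₂, hz2I, hz2x, hz2d⟩ := pick (dist z₁ x) (dist_pos.mpr hz1x)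
    obtain ⟨z₃, hz3I, hz3x, hz3d⟩ := pick (dist z₂ x) (dist_pos.mpr hz2x)
    have d12 : z₁ ≠ z₂ := fun h => by rw [h] at hz2d; exact lt_irrefl _ hz2d
    have d23 : z₂ ≠ z₃ := fun h => by rw [h] at hz3d; exact lt_irrefl _ hz3d
    have d13 : z₁ ≠ z₃ := fun h => by rw [← h] at hz3d; exact absurd (hz3d.trans hz2d) (lt_irrefl _)
    obtain ⟨a, b, haM, hbM, hab, hside⟩ := same_side_pair hz1x hz2x hz3x d12 d13 d23
    have hmemball : ∀ z ∈ ({z₁, z₂, z₃} : Set ℝ), z ∈ Metric.ball x ε := by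
      intro z hz
      rcases hz with h | h | h
      · simpa [h] using hz1d
      · exact Metric.mem_ball.mpr (by rw [h]; exact hz2d.trans hz1d)
      · exact Metric.mem_ball.mpr (by rw [h]; exact (hz3d.trans hz2d).trans hz1d)
    have hmemI : ∀ z ∈ ({z₁, z₂, z₃} : Set ℝ), z ∈ I := by
      intro z hz
      rcases hz with h | h | h
      · rwa [h]
      · rwa [h]
      · rwa [h]
    have haB := hmemball a haM
    have hbB := hmemball b hbM
    have hIccB : Set.Icc a b ⊆ Metric.ball x ε := by
      rw [Real.ball_eq_Ioo] at *
      intro t ht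
      exact ⟨lt_of_lt_of_le haB.1 ht.1, lt_of_le_of_lt ht.2 hbB.2⟩
    -- Rolle
    have hcontA : ContinuousOn A (Set.Icc a b) := fun t ht =>
      ((hA' t (hballJ' (hIccB ht))).continuousAt).continuousWithinAt
    have hAa : A a = 0 := hzero a (hmemI a haM)
    have hAb : A b = 0 := hzero b (hmemI b hbM)
    obtain ⟨c, hc, hc0⟩ := exists_hasDerivAt_eq_zero hab hcontA (by rw [hAa, hAb])
      (fun t ht => hA' t (hballJ' (hIccB (Set.mem_Icc_of_Ioo ht))))
    have hcx : c ≠ x := by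
      rcases hside with h | h
      · exact ne_of_gt (h.trans hc.1)
      · exact ne_of_lt (hc.2.trans h)
    refine ⟨c, hballU ⟨hIccB (Set.mem_Icc_of_Ioo hc), hcx⟩, ?_⟩
    linarith [hc0]
  -- identity theorem
  have hgzero : Set.EqOn g 0 J :=
    hgA.eqOn_zero_of_preconnected_of_frequently_eq_zero hJc.isPreconnected hxJ hfreq
  have hg0 : a₁ m + a₁ 0 = 0 := by
    have := hgzero h0J
    simpa [hgdef] using this
  have ha0 : 0 ≤ a₁ 0 := by
    have hc : ContinuousAt a₁ 0 := hcont.continuousAt (hJo.mem_nhds h0J)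
    have ht : Filter.Tendsto a₁ (𝓝[>] (0:ℝ)) (𝓝 (a₁ 0)) :=
      hc.continuousWithinAt.tendsto
    exact ge_of_tendsto ht (by
      filter_upwards [self_mem_nhdsWithin] with s hs using (hpos s hs).le)
  have : False := by
    have := hpos m hm
    linarith
  exact this.elim
end

section
/- Fix a > 0 and define h(τ) = (aτ + 1) e^{−aτ} for τ ∈ ℝ. For real τ₀ < 0 and τ* > 0, the entry/exit balance ∫_{τ₀}^{τ*} e^{−as}s ds = 0 holds if and only if (aτ* + 1) e^{aτ₀} = e^{aτ*}(aτ₀ + 1). Moreover, for any κ > 0 there exists a > 0 such that for all τ₀ ≤ −κ there is no real solution τ* > 0 of this equation (i.e., the exit time is infinite). -/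
/-- Entry/exit balance for the modified Hopf normal form: for a > 0, τ₀ < 0 < τ*,
∫_{τ₀}^{τ*} e^{−as}s ds = 0 iff (aτ*+1)e^{aτ₀} = e^{aτ*}(aτ₀+1); moreover, for
every κ > 0 there is a > 0 such that for all τ₀ ≤ −κ there is no real exit time
τ* > 0 solving this equation. -/
theorem stmt6 :
    (∀ a : ℝ, 0 < a → ∀ τ₀ τs : ℝ, τ₀ < 0 → 0 < τs →
      ((∫ s in τ₀..τs, Real.exp (-a*s) * s) = 0 ↔
        (a*τs + 1) * Real.exp (a*τ₀) = Real.exp (a*τs) * (a*τ₀ + 1))) ∧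
    (∀ κ : ℝ, 0 < κ → ∃ a : ℝ, 0 < a ∧ ∀ τ₀ : ℝ, τ₀ ≤ -κ →
      ¬ ∃ τs : ℝ, 0 < τs ∧
        (a*τs + 1) * Real.exp (a*τ₀) = Real.exp (a*τs) * (a*τ₀ + 1)) := by
  constructor
  · intro a ha τ₀ τs hτ₀ hτs
    have ha0 : a ≠ 0 := ne_of_gt ha
    set F : ℝ → ℝ := fun s => -(Real.exp (-a*s) * (a*s+1)) / a^2 with hF
    have hderiv : ∀ s : ℝ, HasDerivAt F (Real.exp (-a*s) * s) s := by
      intro s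
      have h1 : HasDerivAt (fun s : ℝ => -a*s) (-a) s := by
        simpa using (hasDerivAt_id s).const_mul (-a)
      have h2 : HasDerivAt (fun s : ℝ => Real.exp (-a*s)) (Real.exp (-a*s) * (-a)) s :=
        h1.exp
      have h3 : HasDerivAt (fun s : ℝ => a*s+1) a s := by
        simpa using ((hasDerivAt_id s).const_mul a).add_const 1
      have h4 := ((h2.mul h3).neg).div_const (a^2)
      refine h4.congr_deriv ?_
      rw [div_eq_iff (by positivity)]
      ring
    have hcont : IntervalIntegrable (fun s => Real.exp (-a*s) * s)
        MeasureTheory.volume τ₀ τs :=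
      (Continuous.mul (Real.continuous_exp.comp (by continuity)) continuous_id).intervalIntegrable _ _
    rw [intervalIntegral.integral_eq_sub_of_hasDerivAt (fun s _ => hderiv s) hcont]
    have hne : (Real.exp (a*τ₀)) ≠ 0 := Real.exp_ne_zero _
    have hne' : (Real.exp (a*τs)) ≠ 0 := Real.exp_ne_zero _
    have e1 : F τs * a^2 = -(Real.exp (-a*τs) * (a*τs+1)) := by
      simp only [hF]; field_simp
    have e2 : F τ₀ * a^2 = -(Real.exp (-a*τ₀) * (a*τ₀+1)) := by
      simp only [hF]; field_simp
    rw [sub_eq_zero, ← mul_left_inj' (show (a^2 : ℝ) ≠ 0 by positivity), e1, e2, neg_inj,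
      show -a*τs = -(a*τs) by ring, show -a*τ₀ = -(a*τ₀) by ring,
      Real.exp_neg, Real.exp_neg, inv_mul_eq_div, inv_mul_eq_div,
      div_eq_div_iff hne' hne]
    exact ⟨fun h => by linear_combination h, fun h => by linear_combination h⟩
  · intro κ hκ
    refine ⟨2/κ, by positivity, ?_⟩
    intro τ₀ hτ₀ ⟨τs, hτs, heq⟩
    have h1 : (2/κ)*τ₀ + 1 ≤ -1 := by
      have : (2/κ)*τ₀ ≤ (2/κ)*(-κ) := by
        apply mul_le_mul_of_nonneg_left hτ₀ (by positivity)
      have h2 : (2/κ)*(-κ) = -2 := by field_simp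
      linarith
    have hL : 0 < ((2/κ)*τs + 1) * Real.exp ((2/κ)*τ₀) := by
      have : 0 < (2/κ)*τs + 1 := by positivity
      positivity
    have hR : Real.exp ((2/κ)*τs) * ((2/κ)*τ₀ + 1) < 0 := by
      apply mul_neg_of_pos_of_neg (Real.exp_pos _)
      linarith
    linarith [heq ▸ hL]
end

section
/- Let Π(s) = s + Σ_{j≥2} π_j s^j be a formal power series with π₀ = 0 and π₁ = 1. Suppose (v_k)_{k≥1} is a nontrivial sequence (some v_j ≠ 0) satisfying the formal power series identity Σ_{k≥1} v_k Π(s)^{k+1} = Σ_{k≥1} v_k s^{k+1}. Then π_j = 0 for all j ≥ 2, i.e., Π(s) = s. -/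
lemma aux_pow_zero (Q : PowerSeries ℝ) (m : ℕ)
    (hQ : ∀ i < m, PowerSeries.coeff i Q = 0) :
    ∀ s t, t < s * m → PowerSeries.coeff t (Q ^ s) = 0 := by
  intro s
  induction s with
  | zero => intro t ht; omega
  | succ s ih =>
    intro t ht
    rw [Nat.succ_mul] at ht
    rw [pow_succ, PowerSeries.coeff_mul]
    apply Finset.sum_eq_zero
    intro p hp
    rw [Finset.HasAntidiagonal.mem_antidiagonal] at hp
    by_cases h : p.2 < m
    · rw [hQ p.2 h, mul_zero]
    · rw [ih p.1 (by omega), zero_mul]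

lemma aux_coeff_key (Q : PowerSeries ℝ) (m : ℕ) (hm : 2 ≤ m)
    (hQ : ∀ i < m, PowerSeries.coeff i Q = 0)
    (N n : ℕ) (hN : 1 ≤ N) (hn : n ≤ N + m - 1) :
    PowerSeries.coeff n ((PowerSeries.X + Q) ^ N)
      = (if n = N then 1 else 0)
        + (if n = N + m - 1 then (N : ℝ) * PowerSeries.coeff m Q else 0) := by
  rw [add_pow, map_sum]
  have hterm : ∀ i ∈ Finset.range (N + 1),
      PowerSeries.coeff n (PowerSeries.X ^ i * Q ^ (N - i) * (N.choose i : PowerSeries ℝ))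
        = (if i = N then (if n = N then (1 : ℝ) else 0) else 0)
          + (if i = N - 1 then (if n = N + m - 1 then (N : ℝ) * PowerSeries.coeff m Q else 0)
              else 0) := by
    intro i hi
    rw [Finset.mem_range] at hi
    have hcast : ((N.choose i : ℕ) : PowerSeries ℝ) = PowerSeries.C ((N.choose i : ℕ) : ℝ) := by
      simp
    rw [hcast, PowerSeries.coeff_mul_C, PowerSeries.coeff_X_pow_mul']
    rcases eq_or_ne i N with rfl | hiN
    · rw [if_pos rfl, if_neg (by omega : ¬ (i = i - 1)), add_zero, Nat.sub_self, pow_zero,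
        Nat.choose_self]
      rcases eq_or_ne n i with rfl | hnN
      · rw [if_pos rfl, if_pos le_rfl, Nat.sub_self]
        simp
      · rw [if_neg hnN]
        split_ifs with h
        · rw [PowerSeries.coeff_one, if_neg (by omega)]
          ring
        · ring
    · rw [if_neg hiN, zero_add]
      rcases eq_or_ne i (N - 1) with rfl | hiN1
      · have hs : N - (N - 1) = 1 := by omega
        have hch : N.choose (N - 1) = N := by
          rw [Nat.choose_symm hN, Nat.choose_one_right]
        rw [hs, pow_one, if_pos rfl, hch]
        rcases eq_or_ne n (N + m - 1) with rfl | hn1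
        · rw [if_pos rfl, if_pos (by omega)]
          have : N + m - 1 - (N - 1) = m := by omega
          rw [this]
          ring
        · rw [if_neg hn1]
          split_ifs with h
          · rw [hQ (n - (N - 1)) (by omega)]
            ring
          · ring
      · rw [if_neg hiN1]
        have hs : 2 ≤ N - i := by omega
        split_ifs with h
        · have key : (N - i) + m ≤ (N - i) * m := Nat.add_le_mul hs hm
          rw [aux_pow_zero Q m hQ (N - i) (n - i) (by omega), zero_mul]
        · rw [zero_mul]
  rw [Finset.sum_congr rfl hterm, Finset.sum_add_distrib,
    Finset.sum_ite_eq' (Finset.range (N + 1)) N,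
    Finset.sum_ite_eq' (Finset.range (N + 1)) (N - 1),
    if_pos (Finset.mem_range.2 (by omega)), if_pos (Finset.mem_range.2 (by omega))]

/-- If π₀ = 0, π₁ = 1 and there is a nontrivial sequence (v_k) with
Σ_{k≥1} v_k Π(s)^{k+1} = Σ_{k≥1} v_k s^{k+1} (coefficient-wise), then π_j = 0
for all j ≥ 2, i.e. Π(s) = s. -/
theorem stmt16 (P : PowerSeries ℝ) (h0 : PowerSeries.coeff 0 P = 0)
    (h1 : PowerSeries.coeff 1 P = 1) (v : ℕ → ℝ)
    (hnt : ∃ j : ℕ, 1 ≤ j ∧ v j ≠ 0)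
    (hid : ∀ n : ℕ,
      ∑ k ∈ Finset.Icc 1 n, v k * PowerSeries.coeff n (P^(k+1))
        = ∑ k ∈ Finset.Icc 1 n,
            v k * PowerSeries.coeff n ((PowerSeries.X : PowerSeries ℝ)^(k+1))) :
    ∀ j : ℕ, 2 ≤ j → PowerSeries.coeff j P = 0 := by
  by_contra hcon
  push_neg at hcon
  obtain ⟨m0, hm0⟩ := hcon
  have hex : ∃ m, 2 ≤ m ∧ PowerSeries.coeff m P ≠ 0 := ⟨m0, hm0⟩
  classical
  set m := Nat.find hex with hmdef
  obtain ⟨hm2, hc⟩ := Nat.find_spec hex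
  have hmmin : ∀ i < m, ¬(2 ≤ i ∧ PowerSeries.coeff i P ≠ 0) := fun i hi =>
    Nat.find_min hex hi
  set j := Nat.find hnt with hjdef
  obtain ⟨hj1, hvj⟩ := Nat.find_spec hnt
  have hjmin : ∀ i < j, ¬(1 ≤ i ∧ v i ≠ 0) := fun i hi => Nat.find_min hnt hi
  set Q : PowerSeries ℝ := P - PowerSeries.X with hQdef
  have hXQ : PowerSeries.X + Q = P := by ring
  have hQlow : ∀ i < m, PowerSeries.coeff i Q = 0 := by
    intro i hi
    rw [hQdef, map_sub, PowerSeries.coeff_X]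
    rcases Nat.lt_or_ge i 2 with h2 | h2
    · interval_cases i <;> simp [h0, h1]
    · have := hmmin i hi
      push_neg at this
      rw [this h2, if_neg (by omega)]
      ring
  have hcQ : PowerSeries.coeff m Q = PowerSeries.coeff m P := by
    rw [hQdef, map_sub, PowerSeries.coeff_X, if_neg (by omega)]
    ring
  set n := j + m with hndef
  have hkey := hid n
  have hL : ∑ k ∈ Finset.Icc 1 n, v k * PowerSeries.coeff n (P ^ (k + 1))
      = v j * ((j + 1 : ℕ) * PowerSeries.coeff m P) + v (j + m - 1) := by
    have hterm : ∀ k ∈ Finset.Icc 1 n,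
        v k * PowerSeries.coeff n (P ^ (k + 1))
          = (if k = j then v j * ((j + 1 : ℕ) * PowerSeries.coeff m P) else 0)
            + (if k = j + m - 1 then v (j + m - 1) else 0) := by
      intro k hk
      rw [Finset.mem_Icc] at hk
      rcases Nat.lt_or_ge k j with hkj | hkj
      · have hv0 : v k = 0 := by
          have := hjmin k hkj
          push_neg at this
          exact this hk.1
        rw [hv0, zero_mul, if_neg (by omega), if_neg (by omega), add_zero]
      · rw [← hXQ, aux_coeff_key Q m hm2 hQlow (k + 1) n (by omega) (by omega)]
        rw [hcQ]
        rcases eq_or_ne k j with rfl | hkj'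
        · rw [if_neg (by omega), if_pos (by omega), if_pos rfl, if_neg (by omega)]
          push_cast
          rw [hXQ]
          ring
        · rcases eq_or_ne k (j + m - 1) with rfl | hkj''
          · rw [if_pos (by omega), if_neg (by omega), if_neg (by omega), if_pos rfl]
            ring
          · rw [if_neg (by omega), if_neg (by omega), if_neg hkj', if_neg hkj'']
            ring
    rw [Finset.sum_congr rfl hterm, Finset.sum_add_distrib,
      Finset.sum_ite_eq' (Finset.Icc 1 n) j, Finset.sum_ite_eq' (Finset.Icc 1 n) (j + m - 1),
      if_pos (Finset.mem_Icc.2 (by omega)), if_pos (Finset.mem_Icc.2 (by omega))]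
  have hR : ∑ k ∈ Finset.Icc 1 n,
      v k * PowerSeries.coeff n ((PowerSeries.X : PowerSeries ℝ) ^ (k + 1))
        = v (j + m - 1) := by
    have hterm : ∀ k ∈ Finset.Icc 1 n,
        v k * PowerSeries.coeff n ((PowerSeries.X : PowerSeries ℝ) ^ (k + 1))
          = if k = j + m - 1 then v (j + m - 1) else 0 := by
      intro k hk
      rw [PowerSeries.coeff_X_pow]
      rcases eq_or_ne k (j + m - 1) with rfl | hk'
      · rw [if_pos (by omega), if_pos rfl]
        ring
      · rw [if_neg (by omega), if_neg hk']
        ring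
    rw [Finset.sum_congr rfl hterm, Finset.sum_ite_eq' (Finset.Icc 1 n) (j + m - 1),
      if_pos (Finset.mem_Icc.2 (by omega))]
  rw [hL, hR] at hkey
  have : v j * ((j + 1 : ℕ) * PowerSeries.coeff m P) = 0 := by linarith
  rcases mul_eq_zero.1 this with h | h
  · exact hvj h
  · rcases mul_eq_zero.1 h with h' | h'
    · have : (j : ℝ) + 1 = 0 := by push_cast at h' ⊢; linarith
      have := j.cast_nonneg (α := ℝ)
      linarith
    · exact hc h'
end
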